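/- Let H_s be an m×n real matrix with all entries in {0,1}, such that every column contains exactly c ones and every row contains exactly d ones. Let L = H_sᵀ·H_s, let λ₁ = cd (so L·𝟏 = λ₁·𝟏), and let λ₂ be a real number with λ₂ < λ₁ such that v·L·vᵀ ≤ λ₂·‖v‖₂² for every v ∈ ℝⁿ with ⟨v, 𝟏⟩ = 0. For each row index j let I_j = { i : (H_s)_{j,i} = 1 }. Let x ∈ ℝⁿ be entrywise nonnegative, not identically zero, and assume that for every j and every ℓ ∈ I_j, Σ_{i ∈ I_j \ {ℓ}} x_i ≥ x_ℓ. Then ( Σ_{i=1}^{n} x_i )² / ( Σ_{i=1}^{n} x_i² ) ≥ n·(2c − λ₂)/(λ₁ − λ₂). -/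

import Mathlib

open Finset Matrix

/-- Eigenvalue bound (key inequality): let `Hs` be an `m × n` 0–1 matrix with exactly
`c` ones per column and `d` ones per row, `L = Hsᵀ Hs`, `λ₁ = cd`, and `λ₂ < λ₁` an
upper bound for the Rayleigh quotient of `L` on vectors orthogonal to the all-ones
vector. If `x ∈ ℝⁿ` is nonnegative, nonzero, and satisfies the per-check inequalities
`∑_{i ∈ I_j \ {ℓ}} x i ≥ x ℓ` for all `j` and `ℓ ∈ I_j = {i : Hs j i = 1}`, then
`(∑_i x_i)² / (∑_i x_i²) ≥ n (2c − λ₂)/(λ₁ − λ₂)`. -/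
theorem eigenvalue_bound_ratio {m n : ℕ} (c d : ℕ)
    (Hs : Matrix (Fin m) (Fin n) ℝ)
    (h01 : ∀ j i, Hs j i = 0 ∨ Hs j i = 1)
    (hcol : ∀ i, (univ.filter (fun j => Hs j i = 1)).card = c)
    (hrow : ∀ j, (univ.filter (fun i => Hs j i = 1)).card = d)
    (lam2 : ℝ) (hlam2 : lam2 < (c : ℝ) * d)
    (h2 : ∀ v : Fin n → ℝ, ∑ i, v i = 0 →
      v ⬝ᵥ ((Hsᵀ * Hs) *ᵥ v) ≤ lam2 * ∑ i, (v i) ^ 2)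
    (x : Fin n → ℝ) (hx : ∀ i, 0 ≤ x i) (hx0 : x ≠ 0)
    (hcheck : ∀ j, ∀ ℓ, Hs j ℓ = 1 →
      ∑ i ∈ (univ.filter (fun i => Hs j i = 1)).erase ℓ, x i ≥ x ℓ) :
    (∑ i, x i) ^ 2 / (∑ i, (x i) ^ 2)
      ≥ n * (2 * c - lam2) / ((c : ℝ) * d - lam2) := by
  have hn : 0 < n := by
    rcases Nat.eq_zero_or_pos n with h | h
    · subst h; exact absurd (Subsingleton.elim x 0) hx0
    · exact h
  have hnR : (0:ℝ) < n := Nat.cast_pos.mpr hn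
  set S := ∑ i, x i with hS
  set Q := ∑ i, (x i)^2 with hQ
  have hQpos : 0 < Q := by
    obtain ⟨i, hi⟩ : ∃ i, x i ≠ 0 := by
      by_contra h; push_neg at h; exact hx0 (funext h)
    exact Finset.sum_pos' (fun i _ => sq_nonneg _)
      ⟨i, Finset.mem_univ i, by positivity⟩
  have hcolR : ∀ i, ∑ j, Hs j i = (c:ℝ) := by
    intro i
    have h1 : ∑ j, Hs j i = ∑ j, (if Hs j i = 1 then (1:ℝ) else 0) := by
      refine Finset.sum_congr rfl fun j _ => ?_
      rcases h01 j i with h | h <;> simp [h]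
    rw [h1, Finset.sum_boole, hcol]
  have hrowR : ∀ j, ∑ i, Hs j i = (d:ℝ) := by
    intro j
    have h1 : ∑ i, Hs j i = ∑ i, (if Hs j i = 1 then (1:ℝ) else 0) := by
      refine Finset.sum_congr rfl fun i _ => ?_
      rcases h01 j i with h | h <;> simp [h]
    rw [h1, Finset.sum_boole, hrow]
  have hmd : (m:ℝ) * d = n * c := by
    have h1 : ∑ j : Fin m, ∑ i : Fin n, Hs j i = (m:ℝ) * d := by
      simp [hrowR, mul_comm]
    have h2' : ∑ i : Fin n, ∑ j : Fin m, Hs j i = (n:ℝ) * c := by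
      simp [hcolR, mul_comm]
    rw [← h1, ← h2', Finset.sum_comm]
  set v : Fin n → ℝ := fun i => x i - S / n with hv
  have hvsum : ∑ i, v i = 0 := by
    simp only [hv, Finset.sum_sub_distrib, Finset.sum_const, Finset.card_univ,
      Fintype.card_fin, nsmul_eq_mul, ← hS]
    field_simp
    ring
  have hB : ∀ z y : Fin n → ℝ,
      z ⬝ᵥ ((Hsᵀ * Hs) *ᵥ y) = ∑ j, (Hs *ᵥ z) j * (Hs *ᵥ y) j := by
    intro z y
    rw [← mulVec_mulVec, dotProduct_mulVec, vecMul_transpose]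
    rfl
  have hwv : ∀ j, (Hs *ᵥ x) j = (Hs *ᵥ v) j + S / n * d := by
    intro j
    have h1 : (Hs *ᵥ v) j = (Hs *ᵥ x) j - S / n * d := by
      simp only [mulVec, dotProduct, hv, mul_sub, Finset.sum_sub_distrib]
      rw [← Finset.sum_mul, hrowR j]
      ring
    linarith [h1]
  have hu0 : ∑ j, (Hs *ᵥ v) j = 0 := by
    simp only [mulVec, dotProduct]
    rw [Finset.sum_comm]
    have h1 : ∀ i, ∑ j, Hs j i * v i = (c:ℝ) * v i := fun i => by
      rw [← Finset.sum_mul, hcolR]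
    simp only [h1, ← Finset.mul_sum, hvsum, mul_zero]
  have hexp : ∑ j, ((Hs *ᵥ x) j)^2
      = ∑ j, ((Hs *ᵥ v) j)^2 + (m:ℝ) * (S / n * d)^2 := by
    calc ∑ j, ((Hs *ᵥ x) j)^2
        = ∑ j, (((Hs *ᵥ v) j)^2 + (2 * (S / n * d)) * (Hs *ᵥ v) j
            + (S / n * d)^2) := by
          refine Finset.sum_congr rfl fun j _ => ?_
          rw [hwv j]; ring
      _ = ∑ j, ((Hs *ᵥ v) j)^2 + (2 * (S / n * d)) * ∑ j, (Hs *ᵥ v) j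
            + (m:ℝ) * (S / n * d)^2 := by
          rw [Finset.sum_add_distrib, Finset.sum_add_distrib, ← Finset.mul_sum]
          simp [Finset.card_univ, mul_comm]
      _ = ∑ j, ((Hs *ᵥ v) j)^2 + (m:ℝ) * (S / n * d)^2 := by
          rw [hu0]; ring
  have hwI : ∀ j, (Hs *ᵥ x) j = ∑ i ∈ univ.filter (fun i => Hs j i = 1), x i := by
    intro j
    simp only [mulVec, dotProduct]
    rw [Finset.sum_filter]
    refine Finset.sum_congr rfl fun i _ => ?_
    rcases h01 j i with h | h <;> simp [h]
  have hjlb : ∀ j, 2 * ∑ i ∈ univ.filter (fun i => Hs j i = 1), (x i)^2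
      ≤ ((Hs *ᵥ x) j)^2 := by
    intro j
    rw [hwI j]
    set I := univ.filter (fun i => Hs j i = 1) with hI
    have key : ∀ ℓ ∈ I, 2 * x ℓ ≤ ∑ i ∈ I, x i := by
      intro ℓ hℓ
      have h1 := hcheck j ℓ (by simpa [hI] using (Finset.mem_filter.mp hℓ).2)
      have h3 : ∑ i ∈ I, x i = x ℓ + ∑ i ∈ I.erase ℓ, x i :=
        (Finset.add_sum_erase I x hℓ).symm
      linarith
    calc 2 * ∑ ℓ ∈ I, (x ℓ)^2 = ∑ ℓ ∈ I, (2 * x ℓ) * x ℓ := by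
          rw [Finset.mul_sum]; refine Finset.sum_congr rfl fun ℓ _ => by ring
      _ ≤ ∑ ℓ ∈ I, (∑ i ∈ I, x i) * x ℓ :=
          Finset.sum_le_sum fun ℓ hℓ =>
            mul_le_mul_of_nonneg_right (key ℓ hℓ) (hx ℓ)
      _ = (∑ i ∈ I, x i)^2 := by rw [← Finset.mul_sum]; ring
  have hcQ : ∑ j, ∑ i ∈ univ.filter (fun i => Hs j i = 1), (x i)^2
      = (c:ℝ) * Q := by
    have h1 : ∀ j, ∑ i ∈ univ.filter (fun i => Hs j i = 1), (x i)^2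
        = ∑ i, Hs j i * (x i)^2 := by
      intro j
      rw [Finset.sum_filter]
      refine Finset.sum_congr rfl fun i _ => ?_
      rcases h01 j i with h | h <;> simp [h]
    simp only [h1]
    rw [Finset.sum_comm]
    have h3 : ∀ i, ∑ j, Hs j i * (x i)^2 = (c:ℝ) * (x i)^2 := fun i => by
      rw [← Finset.sum_mul, hcolR]
    simp only [h3, ← Finset.mul_sum, ← hQ]
  have hlb : 2 * (c:ℝ) * Q ≤ ∑ j, ((Hs *ᵥ x) j)^2 := by
    calc 2 * (c:ℝ) * Q
        = ∑ j, 2 * ∑ i ∈ univ.filter (fun i => Hs j i = 1), (x i)^2 := by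
          rw [← Finset.mul_sum, hcQ]; ring
      _ ≤ ∑ j, ((Hs *ᵥ x) j)^2 := Finset.sum_le_sum fun j _ => hjlb j
  have hv2 : ∑ i, (v i)^2 = Q - S^2 / n := by
    have h1 : ∀ i, (v i)^2 = (x i)^2 - 2 * (S / n) * x i + (S / n)^2 := by
      intro i; simp only [hv]; ring
    simp only [h1, Finset.sum_add_distrib, Finset.sum_sub_distrib,
      ← Finset.mul_sum, Finset.sum_const, Finset.card_univ, Fintype.card_fin,
      nsmul_eq_mul, ← hS, ← hQ]
    field_simp
    ring
  have hup : ∑ j, ((Hs *ᵥ v) j)^2 ≤ lam2 * (Q - S^2 / n) := by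
    have h1 := h2 v hvsum
    rw [hB v v] at h1
    rw [← hv2]
    calc ∑ j, ((Hs *ᵥ v) j)^2 = ∑ j, (Hs *ᵥ v) j * (Hs *ᵥ v) j := by
          refine Finset.sum_congr rfl fun j _ => by ring
      _ ≤ lam2 * ∑ i, (v i)^2 := h1
  have hma : (m:ℝ) * (S / n * d)^2 = (c:ℝ) * d * (S^2 / n) := by
    have hne : (n:ℝ) ≠ 0 := ne_of_gt hnR
    field_simp
    linear_combination (S^2 * (d:ℝ)) * hmd
  have hfin : (2 * (c:ℝ) - lam2) * Q ≤ ((c:ℝ) * d - lam2) * (S^2 / n) := by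
    nlinarith [hlb, hexp, hup, hma]
  rw [ge_iff_le, div_le_div_iff₀ (by linarith) hQpos]
  have h4 := mul_le_mul_of_nonneg_left hfin hnR.le
  have h5 : (n:ℝ) * (((c:ℝ) * d - lam2) * (S^2 / n)) = ((c:ℝ) * d - lam2) * S^2 := by
    field_simp
  calc (n:ℝ) * (2 * c - lam2) * Q = (n:ℝ) * ((2 * (c:ℝ) - lam2) * Q) := by ring
    _ ≤ (n:ℝ) * (((c:ℝ) * d - lam2) * (S^2 / n)) := h4
    _ = ((c:ℝ) * d - lam2) * S^2 := h5
    _ = S^2 * ((c:ℝ) * d - lam2) := by ring
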